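/- Let J₂ₘ be the standard 2m×2m symplectic matrix. On Mat(2m×2m, ℝ) define [A,B]_m = 2[ÃJB̃ − ǍJB̌]_sym + 2[ǍJB̃ + ÃJB̌]_skew, where Ã, Ǎ (resp. B̃, B̌) are the symmetric and antisymmetric parts of A (resp. B), and J = J₂ₘ. Then the map h: Mat(2m×2m, ℝ) → Mat(2m×2m, ℂ), h(A) = J(Ã + iǍ), satisfies h([A,B]_m) = [h(A), h(B)] (commutator), i.e., h is a Lie algebra homomorphism, and h is a real-linear bijection onto u(m,m; iJ). -/
import Mathlib

open Matrix

noncomputable section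

variable {m : ℕ}

def symPart (A : Matrix (Fin m ⊕ Fin m) (Fin m ⊕ Fin m) ℝ) := (2 : ℝ)⁻¹ • (A + Aᵀ)
def skewPart (A : Matrix (Fin m ⊕ Fin m) (Fin m ⊕ Fin m) ℝ) := (2 : ℝ)⁻¹ • (A - Aᵀ)

/-- The bracket [A,B]_m on Mat(2m×2m, ℝ). -/
def brm (A B : Matrix (Fin m ⊕ Fin m) (Fin m ⊕ Fin m) ℝ) :
    Matrix (Fin m ⊕ Fin m) (Fin m ⊕ Fin m) ℝ :=
  letI J := Matrix.J (Fin m) ℝ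
  (2 : ℝ) • symPart (symPart A * J * symPart B - skewPart A * J * skewPart B)
    + (2 : ℝ) • skewPart (skewPart A * J * symPart B + symPart A * J * skewPart B)

/-- The map h(A) = J(Ã + iǍ) into complex matrices. -/
def hmap (A : Matrix (Fin m ⊕ Fin m) (Fin m ⊕ Fin m) ℝ) :
    Matrix (Fin m ⊕ Fin m) (Fin m ⊕ Fin m) ℂ :=
  ((Matrix.J (Fin m) ℝ).map (Complex.ofReal)) *
    ((symPart A).map (Complex.ofReal) + Complex.I • (skewPart A).map (Complex.ofReal))

abbrev CC (A : Matrix (Fin m ⊕ Fin m) (Fin m ⊕ Fin m) ℝ) :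
    Matrix (Fin m ⊕ Fin m) (Fin m ⊕ Fin m) ℂ := A.map (Complex.ofReal)

lemma CC_mul (A B : Matrix (Fin m ⊕ Fin m) (Fin m ⊕ Fin m) ℝ) :
    CC (A * B) = CC A * CC B := Matrix.map_mul (f := Complex.ofRealHom)

lemma CC_add (A B : Matrix (Fin m ⊕ Fin m) (Fin m ⊕ Fin m) ℝ) :
    CC (A + B) = CC A + CC B := by ext i j; simp [Matrix.map_apply]

lemma CC_smul (c : ℝ) (A : Matrix (Fin m ⊕ Fin m) (Fin m ⊕ Fin m) ℝ) :
    CC (c • A) = (c : ℂ) • CC A := by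
  ext i j; simp [Matrix.map_apply]

lemma CC_transpose (A : Matrix (Fin m ⊕ Fin m) (Fin m ⊕ Fin m) ℝ) :
    CC (Aᵀ) = (CC A)ᵀ := by ext i j; simp [Matrix.map_apply]

lemma CC_conjT (A : Matrix (Fin m ⊕ Fin m) (Fin m ⊕ Fin m) ℝ) :
    (CC A)ᴴ = CC (Aᵀ) := by
  ext i j; simp [Matrix.map_apply, conjTranspose_apply, Complex.conj_ofReal]

lemma sym_t (A : Matrix (Fin m ⊕ Fin m) (Fin m ⊕ Fin m) ℝ) : (symPart A)ᵀ = symPart A := by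
  simp [symPart, transpose_add, transpose_smul, add_comm]

lemma skew_t (A : Matrix (Fin m ⊕ Fin m) (Fin m ⊕ Fin m) ℝ) : (skewPart A)ᵀ = -skewPart A := by
  simp [skewPart, transpose_sub, transpose_smul]; module

lemma sym_add_skew (A : Matrix (Fin m ⊕ Fin m) (Fin m ⊕ Fin m) ℝ) :
    symPart A + skewPart A = A := by
  simp [symPart, skewPart]; module

local notation "JR" => Matrix.J (Fin m) ℝ

lemma brm_eq (A B : Matrix (Fin m ⊕ Fin m) (Fin m ⊕ Fin m) ℝ) :
    brm A B =
      (symPart A * JR * symPart B - symPart B * JR * symPart A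
        - skewPart A * JR * skewPart B + skewPart B * JR * skewPart A)
      + (skewPart A * JR * symPart B + symPart A * JR * skewPart B
        - symPart B * JR * skewPart A - skewPart B * JR * symPart A) := by
  have hSA := sym_t A; have hSB := sym_t B
  have hKA := skew_t A; have hKB := skew_t B
  unfold brm
  generalize symPart A = SA at *
  generalize symPart B = SB at *
  generalize skewPart A = KA at *
  generalize skewPart B = KB at *
  simp only [symPart, skewPart, transpose_sub, transpose_add, transpose_mul,
    Matrix.J_transpose, hSA, hSB, hKA, hKB, mul_neg, neg_mul, neg_neg, mul_assoc]
  module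

lemma CC_sub (A B : Matrix (Fin m ⊕ Fin m) (Fin m ⊕ Fin m) ℝ) :
    CC (A - B) = CC A - CC B := by ext i j; simp [Matrix.map_apply]

lemma symPart_of (X Y : Matrix (Fin m ⊕ Fin m) (Fin m ⊕ Fin m) ℝ)
    (hX : Xᵀ = X) (hY : Yᵀ = -Y) : symPart (X + Y) = X := by
  simp only [symPart, transpose_add, hX, hY]; module

lemma skewPart_of (X Y : Matrix (Fin m ⊕ Fin m) (Fin m ⊕ Fin m) ℝ)
    (hX : Xᵀ = X) (hY : Yᵀ = -Y) : skewPart (X + Y) = Y := by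
  simp only [skewPart, transpose_add, hX, hY]; module

lemma hom_lemma (A B : Matrix (Fin m ⊕ Fin m) (Fin m ⊕ Fin m) ℝ) :
    hmap (brm A B) = hmap A * hmap B - hmap B * hmap A := by
  have hSA := sym_t A; have hSB := sym_t B
  have hKA := skew_t A; have hKB := skew_t B
  have hbr := brm_eq A B
  have hR1 : (symPart A * JR * symPart B - symPart B * JR * symPart A
      - skewPart A * JR * skewPart B + skewPart B * JR * skewPart A)ᵀ
      = (symPart A * JR * symPart B - symPart B * JR * symPart A
      - skewPart A * JR * skewPart B + skewPart B * JR * skewPart A) := by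
    simp only [transpose_add, transpose_sub, transpose_mul, Matrix.J_transpose,
      hSA, hSB, hKA, hKB, mul_neg, neg_mul, neg_neg, mul_assoc]
    module
  have hR2 : (skewPart A * JR * symPart B + symPart A * JR * skewPart B
      - symPart B * JR * skewPart A - skewPart B * JR * symPart A)ᵀ
      = -(skewPart A * JR * symPart B + symPart A * JR * skewPart B
      - symPart B * JR * skewPart A - skewPart B * JR * symPart A) := by
    simp only [transpose_add, transpose_sub, transpose_mul, Matrix.J_transpose,
      hSA, hSB, hKA, hKB, mul_neg, neg_mul, neg_neg, mul_assoc]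
    module
  have h1 := symPart_of _ _ hR1 hR2
  have h2 := skewPart_of _ _ hR1 hR2
  rw [← hbr] at h1 h2
  show CC JR * (CC (symPart (brm A B)) + Complex.I • CC (skewPart (brm A B))) = _
  rw [h1, h2]
  show _ = CC JR * (CC (symPart A) + Complex.I • CC (skewPart A))
      * (CC JR * (CC (symPart B) + Complex.I • CC (skewPart B)))
      - CC JR * (CC (symPart B) + Complex.I • CC (skewPart B))
      * (CC JR * (CC (symPart A) + Complex.I • CC (skewPart A)))
  simp only [CC_add, CC_sub, CC_mul, mul_add, add_mul, mul_sub, sub_mul,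
    smul_mul_assoc, mul_smul_comm, mul_assoc, smul_add, smul_sub, smul_smul]
  match_scalars <;> simp [Complex.I_mul_I] <;> ring

lemma CC_neg (A : Matrix (Fin m ⊕ Fin m) (Fin m ⊕ Fin m) ℝ) :
    CC (-A) = -CC A := by ext i j; simp [Matrix.map_apply]

lemma CCJJ : CC (JR) * CC (JR) = -(1 : Matrix (Fin m ⊕ Fin m) (Fin m ⊕ Fin m) ℂ) := by
  rw [← CC_mul, Matrix.J_squared]
  ext i j
  simp [Matrix.map_apply, Matrix.one_apply, Matrix.neg_apply]
  split <;> simp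

lemma lin_lemma (c : ℝ) (A B : Matrix (Fin m ⊕ Fin m) (Fin m ⊕ Fin m) ℝ) :
    hmap (c • A + B) = c • hmap A + hmap B := by
  have h1 : symPart (c • A + B) = c • symPart A + symPart B := by
    simp only [symPart, transpose_add, transpose_smul]; module
  have h2 : skewPart (c • A + B) = c • skewPart A + skewPart B := by
    simp only [skewPart, transpose_add, transpose_smul]; module
  show CC JR * (CC (symPart (c • A + B)) + Complex.I • CC (skewPart (c • A + B)))
    = c • (CC JR * (CC (symPart A) + Complex.I • CC (skewPart A)))
      + CC JR * (CC (symPart B) + Complex.I • CC (skewPart B))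
  rw [h1, h2, CC_add, CC_add, CC_smul, CC_smul]
  simp only [mul_add, smul_add, smul_smul, mul_smul_comm]
  match_scalars <;> simp [Complex.coe_algebraMap] <;> ring

lemma inj_lemma : Function.Injective (hmap (m := m)) := by
  intro A B h
  have h2 : CC (symPart A) + Complex.I • CC (skewPart A)
      = CC (symPart B) + Complex.I • CC (skewPart B) := by
    have := congrArg (fun X => -(CC (JR) * X)) h
    simpa only [hmap, ← mul_assoc, CCJJ, neg_mul, one_mul, neg_neg] using this
  have hS : symPart A = symPart B ∧ skewPart A = skewPart B := by
    constructor <;> ext i j <;>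
    · have := congrFun (congrFun h2 i) j
      simp only [Matrix.add_apply, Matrix.smul_apply, Matrix.map_apply, smul_eq_mul] at this
      have hre := congrArg Complex.re this
      have him := congrArg Complex.im this
      simp at hre him
      first | exact hre | exact him
  calc A = symPart A + skewPart A := (sym_add_skew A).symm
    _ = symPart B + skewPart B := by rw [hS.1, hS.2]
    _ = B := sym_add_skew B

lemma key_lemma (A : Matrix (Fin m ⊕ Fin m) (Fin m ⊕ Fin m) ℝ) :
    (Complex.I • CC (JR)) * hmap A = CC (skewPart A) - Complex.I • CC (symPart A) := by
  show (Complex.I • CC JR) * (CC JR * (CC (symPart A) + Complex.I • CC (skewPart A))) = _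
  rw [smul_mul_assoc, ← mul_assoc, CCJJ]
  simp only [neg_mul, one_mul, mul_add, smul_add, smul_smul, Complex.I_mul_I, smul_neg, neg_add,
    neg_neg, neg_smul, one_smul]
  abel

lemma mem_lemma (A : Matrix (Fin m ⊕ Fin m) (Fin m ⊕ Fin m) ℝ) :
    ((Complex.I • CC (JR)) * hmap A)ᴴ + (Complex.I • CC (JR)) * hmap A = 0 := by
  rw [key_lemma]
  rw [conjTranspose_sub, conjTranspose_smul, CC_conjT, CC_conjT, sym_t, skew_t, CC_neg]
  simp only [Complex.star_def, Complex.conj_I, neg_smul]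
  abel

lemma surj_lemma (M : Matrix (Fin m ⊕ Fin m) (Fin m ⊕ Fin m) ℂ)
    (hM : ((Complex.I • CC (JR)) * M)ᴴ + (Complex.I • CC (JR)) * M = 0) :
    ∃ A, hmap A = M := by
  set N : Matrix (Fin m ⊕ Fin m) (Fin m ⊕ Fin m) ℂ := -(CC (JR) * M) with hNdef
  have hJM : CC (JR) * M = -N := by rw [hNdef, neg_neg]
  have hHM : (Complex.I • CC (JR)) * M = (-Complex.I) • N := by
    rw [smul_mul_assoc, hJM]; simp
  have hN : Nᴴ = N := by
    rw [hHM] at hM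
    have h1 : (Complex.I) • Nᴴ + (-Complex.I) • N = 0 := by
      rw [← hM]; congr 1
      rw [conjTranspose_smul]
      simp [Complex.star_def]
    have h2 : Complex.I • Nᴴ = Complex.I • N := by
      have := h1
      rw [neg_smul, add_neg_eq_zero] at this
      exact this
    exact smul_right_injective _ Complex.I_ne_zero h2
  have hNe : ∀ i j, (starRingEnd ℂ) (N j i) = N i j := by
    intro i j
    have := congrFun (congrFun hN i) j
    simpa [conjTranspose_apply, Complex.star_def] using this
  refine ⟨Matrix.of (fun i j => (N i j).re + (N i j).im), ?_⟩
  have hkey : CC (symPart (Matrix.of (fun i j => (N i j).re + (N i j).im)))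
      + Complex.I • CC (skewPart (Matrix.of (fun i j => (N i j).re + (N i j).im))) = N := by
    ext i j
    have h3 : (N j i).re = (N i j).re := by
      have := hNe i j; rw [Complex.ext_iff] at this; simpa using this.1
    have h4 : (N j i).im = -(N i j).im := by
      have := hNe i j; rw [Complex.ext_iff] at this
      have := this.2; simp at this; linarith
    apply Complex.ext <;>
      simp [symPart, skewPart, Matrix.map_apply, Matrix.add_apply, Matrix.smul_apply,
        Matrix.transpose_apply, Matrix.sub_apply, Matrix.of_apply, h3, h4] <;> ring
  show CC JR * _ = M
  rw [hkey, hNdef, mul_neg, ← mul_assoc, CCJJ]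
  simp


theorem hmap_lie_algebra_iso_u_mm :
    letI JC := (Matrix.J (Fin m) ℝ).map (Complex.ofReal)
    letI H := Complex.I • JC
    -- h is a Lie algebra homomorphism
    (∀ A B : Matrix (Fin m ⊕ Fin m) (Fin m ⊕ Fin m) ℝ,
      hmap (brm A B) = hmap A * hmap B - hmap B * hmap A) ∧
    -- h is real-linear
    (∀ (c : ℝ) (A B : Matrix (Fin m ⊕ Fin m) (Fin m ⊕ Fin m) ℝ),
      hmap (c • A + B) = c • hmap A + hmap B) ∧
    -- h is injective
    Function.Injective (hmap (m := m)) ∧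
    -- the range of h is exactly u(m,m; iJ)
    (∀ A : Matrix (Fin m ⊕ Fin m) (Fin m ⊕ Fin m) ℝ, (H * hmap A)ᴴ + H * hmap A = 0) ∧
    (∀ M : Matrix (Fin m ⊕ Fin m) (Fin m ⊕ Fin m) ℂ,
      (H * M)ᴴ + H * M = 0 → ∃ A, hmap A = M) :=
  ⟨hom_lemma, lin_lemma, inj_lemma, mem_lemma, surj_lemma⟩

end
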